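/- Let G be a group and F = ⋆_{n∈ℕ} G the free product of countably many copies of G, with canonical injections ιₙ : G → F. Define homomorphisms i₀, i₁ : F → F' where F' = ⋆_{m∈ℕ} G with injections κₘ, by i₀(ι₀(u)) = κ₀(u), i₀(ι_{2m-1}(u)) = i₀(ι_{2m}(u)) = κₘ(u) for m ≥ 1, and i₁(ι_{2m}(u)) = i₁(ι_{2m+1}(u)) = κₘ(u) for m ≥ 0. Then in the pushout (amalgamated colimit) of i₀ and i₁ over F, every generator κₘ(u) of either copy of F' becomes equal (via the pushout maps j₀, j₁) to j₀(κ₀(u')) for a suitable u', and in fact the images of generators satisfy the relations j₀(κₘ(u)) = j₁(κₘ(u)) ... = j₀(κ_{m+1}(u)) for all m; consequently the pushout group is generated by {j₀(κ₀(u)) : u ∈ G}. -/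

import Mathlib

open Monoid

/-- The free product of countably many copies of `G`. -/
abbrev SnakeF (G : Type*) [Group G] : Type _ := Monoid.CoprodI (fun _ : ℕ => G)

/-- The copy of `u ∈ G` in the `n`-th free factor. -/
def uIn {G : Type*} [Group G] (n : ℕ) (u : G) : SnakeF G :=
  Monoid.CoprodI.of (M := fun _ : ℕ => G) (i := n) u

/-- `i₀(ι₀ u) = κ₀ u`, `i₀(ι_{2m-1} u) = i₀(ι_{2m} u) = κₘ u` for `m ≥ 1`. -/
def snakeMap0 (G : Type*) [Group G] : SnakeF G →* SnakeF G :=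
  Monoid.CoprodI.lift (fun n : ℕ =>
    Monoid.CoprodI.of (M := fun _ : ℕ => G) (i := (n + 1) / 2))

/-- `i₁(ι_{2m} u) = i₁(ι_{2m+1} u) = κₘ u` for `m ≥ 0`. -/
def snakeMap1 (G : Type*) [Group G] : SnakeF G →* SnakeF G :=
  Monoid.CoprodI.lift (fun n : ℕ =>
    Monoid.CoprodI.of (M := fun _ : ℕ => G) (i := n / 2))

/-- The pushout diagram `F' ←i₀ F →i₁ F'` indexed by `Bool`. -/
def snakeφ (G : Type*) [Group G] : ∀ _ : Bool, SnakeF G →* SnakeF G :=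
  fun b => if b then snakeMap0 G else snakeMap1 G

lemma snakeMap0_uIn {G : Type*} [Group G] (n : ℕ) (u : G) :
    snakeMap0 G (uIn n u) = uIn ((n + 1) / 2) u := by
  simp [snakeMap0, uIn]

lemma snakeMap1_uIn {G : Type*} [Group G] (n : ℕ) (u : G) :
    snakeMap1 G (uIn n u) = uIn (n / 2) u := by
  simp [snakeMap1, uIn]

lemma snake_rel {G : Type*} [Group G] (n : ℕ) (u : G) :
    Monoid.PushoutI.of (φ := snakeφ G) true (uIn ((n + 1) / 2) u) =
      Monoid.PushoutI.of (φ := snakeφ G) false (uIn (n / 2) u) := by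
  have h0 := Monoid.PushoutI.of_apply_eq_base (φ := snakeφ G) true (uIn n u)
  have h1 := Monoid.PushoutI.of_apply_eq_base (φ := snakeφ G) false (uIn n u)
  simp only [snakeφ, if_true, if_false, Bool.false_eq_true, snakeMap0_uIn, snakeMap1_uIn] at h0 h1
  rw [h0, h1]

lemma snake01 {G : Type*} [Group G] (m : ℕ) (u : G) :
    Monoid.PushoutI.of (φ := snakeφ G) true (uIn m u) =
      Monoid.PushoutI.of (φ := snakeφ G) false (uIn m u) := by
  have h := snake_rel (G := G) (2 * m) u
  have h2 : (2 * m + 1) / 2 = m := by omega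
  have h3 : 2 * m / 2 = m := by omega
  rwa [h2, h3] at h

lemma snake10 {G : Type*} [Group G] (m : ℕ) (u : G) :
    Monoid.PushoutI.of (φ := snakeφ G) false (uIn m u) =
      Monoid.PushoutI.of (φ := snakeφ G) true (uIn (m + 1) u) := by
  have := snake_rel (G := G) (2 * m + 1) u
  have h2 : (2 * m + 1 + 1) / 2 = m + 1 := by omega
  have h3 : (2 * m + 1) / 2 = m := by omega
  rw [h2, h3] at this
  exact this.symm

lemma snake_zero {G : Type*} [Group G] (m : ℕ) (u : G) :
    Monoid.PushoutI.of (φ := snakeφ G) true (uIn m u) =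
      Monoid.PushoutI.of (φ := snakeφ G) true (uIn 0 u) := by
  induction m with
  | zero => rfl
  | succ m ih => rw [← snake10, ← snake01, ih]

/-- In the pushout of `i₀`, `i₁`, the images of generators satisfy
`j₀(κₘ u) = j₁(κₘ u) = j₀(κ_{m+1} u)`, each generator equals `j₀(κ₀ u)`, and
the pushout is generated by `{j₀(κ₀ u) : u ∈ G}`. -/
theorem snake_pushout_generated {G : Type*} [Group G] :
    (∀ (m : ℕ) (u : G),
      Monoid.PushoutI.of (φ := snakeφ G) true (uIn m u) =
        Monoid.PushoutI.of (φ := snakeφ G) false (uIn m u) ∧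
      Monoid.PushoutI.of (φ := snakeφ G) false (uIn m u) =
        Monoid.PushoutI.of (φ := snakeφ G) true (uIn (m + 1) u) ∧
      Monoid.PushoutI.of (φ := snakeφ G) true (uIn m u) =
        Monoid.PushoutI.of (φ := snakeφ G) true (uIn 0 u)) ∧
    Subgroup.closure
      (Set.range (fun u : G => Monoid.PushoutI.of (φ := snakeφ G) true (uIn 0 u)))
      = ⊤ := by
  refine ⟨fun m u => ⟨snake01 m u, snake10 m u, snake_zero m u⟩, ?_⟩
  rw [eq_top_iff]
  intro x hx; clear hx
  have key : ∀ (b : Bool) (g : SnakeF G), Monoid.PushoutI.of (φ := snakeφ G) b g ∈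
      Subgroup.closure (Set.range (fun u : G =>
        Monoid.PushoutI.of (φ := snakeφ G) true (uIn 0 u))) := by
    intro b g
    induction g using Monoid.CoprodI.induction_on with
    | of i u =>
      have : Monoid.PushoutI.of (φ := snakeφ G) b (uIn i u) =
          Monoid.PushoutI.of (φ := snakeφ G) true (uIn 0 u) := by
        cases b
        · rw [snake10, snake_zero]
        · exact snake_zero i u
      rw [show Monoid.CoprodI.of u = uIn i u from rfl, this]
      exact Subgroup.subset_closure ⟨u, rfl⟩
    | mul x y hx hy => rw [map_mul]; exact mul_mem hx hy
    | one => rw [map_one]; exact one_mem _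
  induction x using Monoid.PushoutI.induction_on with
  | of i g => exact key i g
  | base h =>
    rw [← Monoid.PushoutI.of_apply_eq_base (φ := snakeφ G) true h]
    exact key true _
  | mul x y hx hy => exact mul_mem hx hy
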